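/- Let n ≥ 1 and let F be a family consisting of all subsets of [n+1] of even size between 2 and k, where k is even, k ≤ n+1, and k divides n+1. If F can be partitioned into perfect partitions of [n+1] (1-factors), then the family of all non-empty subsets of [n] of size at most k can also be partitioned into 1-factors. -/

import Mathlib

open Finset

/-- `M` is a 1-factor of the family of subsets of the ground set `V`:
its members are pairwise disjoint nonempty subsets of `V` whose union is `V`. -/
def IsOneFactor (V : Finset ℕ) (M : Finset (Finset ℕ)) : Prop :=
  (∀ S ∈ M, S.Nonempty) ∧ (∀ S ∈ M, S ⊆ V) ∧
  (∀ S ∈ M, ∀ T ∈ M, S ≠ T → Disjoint S T) ∧ M.biUnion id = V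

/-- The family `F` of subsets of the ground set `V` is 1-factorable:
`F` can be partitioned into 1-factors of `V`. -/
def OneFactorable (V : Finset ℕ) (F : Finset (Finset ℕ)) : Prop :=
  ∃ P : Finset (Finset (Finset ℕ)),
    (∀ M ∈ P, M ⊆ F ∧ IsOneFactor V M) ∧ ∀ S ∈ F, ∃! M, M ∈ P ∧ S ∈ M

theorem even_levels_factorization_reduction (n k : ℕ) (hn : 1 ≤ n) (hk : Even k)
    (hk1 : k ≤ n + 1) (hdvd : k ∣ (n + 1))
    (h : OneFactorable (Icc 1 (n + 1))
      (((Icc 1 (n + 1)).powerset).filter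
        (fun S => 2 ≤ S.card ∧ S.card ≤ k ∧ Even S.card))) :
    OneFactorable (Icc 1 n)
      (((Icc 1 n).powerset).filter (fun S => 1 ≤ S.card ∧ S.card ≤ k)) := by
  classical
  obtain ⟨P, hP1, hP2⟩ := h
  set F : Finset (Finset ℕ) := ((Icc 1 (n + 1)).powerset).filter
      (fun S => 2 ≤ S.card ∧ S.card ≤ k ∧ Even S.card) with hFdef
  set F' : Finset (Finset ℕ) :=
      ((Icc 1 n).powerset).filter (fun S => 1 ≤ S.card ∧ S.card ≤ k) with hF'def
  have hnot : (n + 1) ∉ Icc 1 n := by simp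
  set g : Finset ℕ → Finset ℕ := fun T => T.erase (n + 1) with hg
  set f : Finset ℕ → Finset ℕ :=
      fun S => if Even S.card then S else insert (n + 1) S with hf
  have hkeven : k % 2 = 0 := Nat.even_iff.mp hk
  have hmemF : ∀ T, T ∈ F ↔ T ⊆ Icc 1 (n + 1) ∧ 2 ≤ T.card ∧ T.card ≤ k ∧ Even T.card := by
    intro T; simp [hFdef, mem_filter, mem_powerset, and_assoc]
  have hmemF' : ∀ S, S ∈ F' ↔ S ⊆ Icc 1 n ∧ 1 ≤ S.card ∧ S.card ≤ k := by
    intro S; simp [hF'def, mem_filter, mem_powerset, and_assoc]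
  have hgF : ∀ T ∈ F, g T ∈ F' := by
    intro T hT
    rw [hmemF] at hT
    obtain ⟨hTsub, h2, hTk, hTe⟩ := hT
    rw [hmemF']
    refine ⟨?_, ?_, ?_⟩
    · intro x hx
      have hx' := mem_erase.mp hx
      have := hTsub hx'.2
      simp only [mem_Icc] at this ⊢
      omega
    · have h1 : T.card - 1 ≤ (g T).card := Finset.pred_card_le_card_erase
      omega
    · have := Finset.card_erase_le (s := T) (a := n + 1)
      exact le_trans this hTk
  have hfF : ∀ S ∈ F', f S ∈ F := by
    intro S hS
    rw [hmemF'] at hS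
    obtain ⟨hSsub, h1, hSk⟩ := hS
    have hnS : (n + 1) ∉ S := fun hc => hnot (hSsub hc)
    rw [hmemF]
    by_cases he : Even S.card
    · have hf1 : f S = S := if_pos he
      rw [hf1]
      have := Nat.even_iff.mp he
      refine ⟨fun x hx => ?_, by omega, hSk, he⟩
      have := hSsub hx; simp only [mem_Icc] at this ⊢; omega
    · have hf1 : f S = insert (n + 1) S := if_neg he
      rw [hf1, Finset.card_insert_of_notMem hnS]
      have hodd := Nat.odd_iff.mp (Nat.not_even_iff_odd.mp he)
      refine ⟨?_, by omega, by omega, by rw [Nat.even_iff]; omega⟩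
      intro x hx
      rcases Finset.mem_insert.mp hx with rfl | hx
      · simp
      · have := hSsub hx; simp only [mem_Icc] at this ⊢; omega
  have hgf : ∀ S ∈ F', g (f S) = S := by
    intro S hS
    rw [hmemF'] at hS
    have hnS : (n + 1) ∉ S := fun hc => hnot (hS.1 hc)
    by_cases he : Even S.card
    · simp only [hg, hf, if_pos he]; exact Finset.erase_eq_of_notMem hnS
    · simp only [hg, hf, if_neg he]; exact Finset.erase_insert hnS
  have hfg : ∀ T ∈ F, f (g T) = T := by
    intro T hT
    rw [hmemF] at hT
    obtain ⟨hTsub, h2, hTk, hTe⟩ := hT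
    by_cases hmem : (n + 1) ∈ T
    · have hcard : (g T).card = T.card - 1 := Finset.card_erase_of_mem hmem
      have hne : ¬ Even (g T).card := by
        rw [Nat.even_iff] at hTe ⊢; omega
      simp only [hf, hg, if_neg hne]
      exact (if_neg hne).trans (Finset.insert_erase hmem)
    · have hgT : g T = T := Finset.erase_eq_of_notMem hmem
      rw [hgT]; simp only [hf, if_pos hTe]
  refine ⟨P.image (fun M => M.image g), ?_, ?_⟩
  · intro M' hM'
    obtain ⟨M, hMP, rfl⟩ := Finset.mem_image.mp hM'
    obtain ⟨hMF, hne, hsub, hdisj, hbi⟩ := hP1 M hMP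
    constructor
    · intro S hS
      obtain ⟨T, hT, rfl⟩ := Finset.mem_image.mp hS
      exact hgF T (hMF hT)
    refine ⟨?_, ?_, ?_, ?_⟩
    · intro S hS
      obtain ⟨T, hT, rfl⟩ := Finset.mem_image.mp hS
      have := (hmemF _).mp (hMF hT)
      rw [← Finset.card_pos]
      have h1 : T.card - 1 ≤ (g T).card := Finset.pred_card_le_card_erase
      omega
    · intro S hS
      obtain ⟨T, hT, rfl⟩ := Finset.mem_image.mp hS
      exact ((hmemF' _).mp (hgF T (hMF hT))).1
    · intro S hS T hT hST
      obtain ⟨S0, hS0, rfl⟩ := Finset.mem_image.mp hS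
      obtain ⟨T0, hT0, rfl⟩ := Finset.mem_image.mp hT
      have hne0 : S0 ≠ T0 := fun hc => hST (by rw [hc])
      exact Disjoint.mono (Finset.erase_subset _ _) (Finset.erase_subset _ _)
        (hdisj S0 hS0 T0 hT0 hne0)
    · ext x
      simp only [Finset.mem_biUnion, Finset.mem_image, id]
      constructor
      · rintro ⟨S, ⟨T, hT, rfl⟩, hx⟩
        have hx' := Finset.mem_erase.mp hx
        have : x ∈ M.biUnion id := Finset.mem_biUnion.mpr ⟨T, hT, hx'.2⟩
        rw [hbi] at this
        simp only [mem_Icc] at this ⊢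
        omega
      · intro hx
        simp only [mem_Icc] at hx
        have hx1 : x ∈ Icc 1 (n + 1) := by simp only [mem_Icc]; omega
        rw [← hbi] at hx1
        obtain ⟨T, hT, hxT⟩ := Finset.mem_biUnion.mp hx1
        exact ⟨g T, ⟨T, hT, rfl⟩, Finset.mem_erase.mpr ⟨by omega, hxT⟩⟩
  · intro S hS
    obtain ⟨M, ⟨hMP, hSM⟩, huniq⟩ := hP2 (f S) (hfF S hS)
    refine ⟨M.image g, ⟨Finset.mem_image.mpr ⟨M, hMP, rfl⟩, ?_⟩, ?_⟩
    · exact hgf S hS ▸ Finset.mem_image.mpr ⟨f S, hSM, rfl⟩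
    · rintro M'' ⟨hM''P, hSM''⟩
      obtain ⟨M₂, hM₂P, rfl⟩ := Finset.mem_image.mp hM''P
      obtain ⟨T, hTM₂, rfl⟩ := Finset.mem_image.mp hSM''
      have hTF : T ∈ F := (hP1 M₂ hM₂P).1 hTM₂
      have : f (g T) = T := hfg T hTF
      have hfSM₂ : f (g T) ∈ M₂ := by rw [this]; exact hTM₂
      have := huniq M₂ ⟨hM₂P, hfSM₂⟩
      rw [this]
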